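/- Let I = (𝔼, D, c, f) be a CMP instance whose objective f is of type sum. Then for every e ∈ 𝔼 it holds that l'(I,e) = f(D+(e)) − f(I), where the right-hand side is ∞ when D+(e) = ∅. -/
import Mathlib


open scoped ENNReal BigOperators

/-- Objective type of a combinatorial minimization problem:
sum, product, or bottleneck. -/
inductive ObjType where
  | sum : ObjType
  | prod : ObjType
  | bottleneck : ObjType
deriving DecidableEq

/-- The cost `f_c(S)` of a feasible solution `S` under cost function `c`:
the sum, the product, or the maximum (for nonempty `S`) of the element costs. -/
noncomputable def objCost {ι : Type*} (t : ObjType) (c : ι → ℝ) (S : Finset ι) : ℝ :=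
  match t with
  | ObjType.sum => ∑ e ∈ S, c e
  | ObjType.prod => ∏ e ∈ S, c e
  | ObjType.bottleneck => if h : S.Nonempty then S.sup' h c else 0

/-- The optimal objective value `f(I)` of the instance with feasible set `D`. -/
noncomputable def optVal {ι : Type*} (t : ObjType) (c : ι → ℝ) (D : Finset (Finset ι)) : ℝ :=
  if h : D.Nonempty then D.inf' h (objCost t c) else 0

/-- `S` is an optimal solution of the instance `(𝔼, D, c, f)`. -/
def isOpt {ι : Type*} (t : ObjType) (c : ι → ℝ) (D : Finset (Finset ι)) (S : Finset ι) : Prop :=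
  S ∈ D ∧ objCost t c S = optVal t c D

/-- `0 ≤ a < maxdec(e)`, where `maxdec(e) = ∞` for sum/bottleneck objectives and
`maxdec(e) = c(e)` for the product objective. -/
def decOK {ι : Type*} (t : ObjType) (c : ι → ℝ) (e : ι) (a : ℝ) : Prop :=
  0 ≤ a ∧ (t = ObjType.prod → a < c e)

/-- Extended single upper tolerance
`u'(I,e) = sup {α ≥ 0 : every optimal solution of I is optimal for I_{α,e}}` valued in `[0,∞]`. -/
noncomputable def uTol {ι : Type*} [DecidableEq ι] (t : ObjType) (c : ι → ℝ)
    (D : Finset (Finset ι)) (e : ι) : ℝ≥0∞ :=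
  sSup (ENNReal.ofReal '' {a : ℝ | 0 ≤ a ∧
    ∀ S : Finset ι, isOpt t c D S →
      isOpt t (fun x => if x = e then c x + a else c x) D S})

/-- Extended regular set upper tolerance `u'(I,E)`, valued in `[0,∞]`. -/
noncomputable def uTolSet {ι : Type*} [DecidableEq ι] (t : ObjType) (c : ι → ℝ)
    (D : Finset (Finset ι)) (E : Finset ι) : ℝ≥0∞ :=
  sSup (ENNReal.ofReal '' {a : ℝ |
    ∀ S : Finset ι, isOpt t c D S →
      ∃ α : ι → ℝ, (∀ x, 0 ≤ α x) ∧ (∀ x ∉ E, α x = 0) ∧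
        a = ∑ x ∈ E, α x ∧ isOpt t (fun x => c x + α x) D S})

/-- Extended reverse set upper tolerance `u_b'(I,E)`, valued in `[0,∞]` (`inf ∅ = ∞`). -/
noncomputable def uTolSetRev {ι : Type*} [DecidableEq ι] (t : ObjType) (c : ι → ℝ)
    (D : Finset (Finset ι)) (E : Finset ι) : ℝ≥0∞ :=
  sInf (ENNReal.ofReal '' {a : ℝ |
    ∃ S : Finset ι, isOpt t c D S ∧
      ∃ α : ι → ℝ, (∀ x, 0 ≤ α x) ∧ (∀ x ∉ E, α x = 0) ∧
        a = ∑ x ∈ E, α x ∧ ¬ isOpt t (fun x => c x + α x) D S})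

/-- New single lower tolerance
`l'(I,e) = sup {α : 0 ≤ α < maxdec(e), f(I_{−α,e}) = f(I)}`, valued in `[0,∞]`. -/
noncomputable def lTol {ι : Type*} [DecidableEq ι] (t : ObjType) (c : ι → ℝ)
    (D : Finset (Finset ι)) (e : ι) : ℝ≥0∞ :=
  sSup (ENNReal.ofReal '' {a : ℝ | decOK t c e a ∧
    optVal t (fun x => if x = e then c x - a else c x) D = optVal t c D})

/-- New regular set lower tolerance `l'(I,E)`, valued in `[0,∞]`. -/
noncomputable def lTolSet {ι : Type*} [DecidableEq ι] (t : ObjType) (c : ι → ℝ)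
    (D : Finset (Finset ι)) (E : Finset ι) : ℝ≥0∞ :=
  sSup (ENNReal.ofReal '' {a : ℝ |
    ∃ α : ι → ℝ, (∀ x ∈ E, decOK t c x (α x)) ∧ (∀ x ∉ E, α x = 0) ∧
      a = ∑ x ∈ E, α x ∧ optVal t (fun x => c x - α x) D = optVal t c D})

/-- New reverse set lower tolerance `l_b'(I,E)`, valued in `[0,∞]` (`inf ∅ = ∞`). -/
noncomputable def lTolSetRev {ι : Type*} [DecidableEq ι] (t : ObjType) (c : ι → ℝ)
    (D : Finset (Finset ι)) (E : Finset ι) : ℝ≥0∞ :=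
  sInf (ENNReal.ofReal '' {a : ℝ |
    ∃ α : ι → ℝ, (∀ x ∈ E, decOK t c x (α x)) ∧ (∀ x ∉ E, α x = 0) ∧
      a = ∑ x ∈ E, α x ∧ optVal t (fun x => c x - α x) D < optVal t c D})



lemma pert_cost {ι : Type*} [DecidableEq ι] (c : ι → ℝ) (e : ι) (a : ℝ) (S : Finset ι) :
    objCost ObjType.sum (fun x => if x = e then c x - a else c x) S
      = objCost ObjType.sum c S - (if e ∈ S then a else 0) := by
  simp only [objCost]
  have h1 : ∀ x ∈ S, (if x = e then c x - a else c x) = c x - (if x = e then a else 0) := by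
    intro x _; split <;> simp
  rw [Finset.sum_congr rfl h1, Finset.sum_sub_distrib, Finset.sum_ite_eq' S e fun _ => a]

lemma optVal_eq {ι : Type*} (c : ι → ℝ) (D : Finset (Finset ι)) (hD : D.Nonempty) :
    optVal ObjType.sum c D = D.inf' hD (objCost ObjType.sum c) := dif_pos hD

/-- Theorem 5(b): for a sum objective,
`l'(I,e) = f(D⁺(e)) − f(I)`, where the right-hand side is `∞` if `D⁺(e) = ∅`. -/
theorem lsi_formula_sum {ι : Type*} [Fintype ι] [DecidableEq ι]
    (c : ι → ℝ) (D : Finset (Finset ι))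
    (hD : D.Nonempty) (hSne : ∀ S ∈ D, S.Nonempty) :
    ∀ e : ι, lTol ObjType.sum c D e =
      if h : (D.filter fun S => e ∈ S).Nonempty then
        ENNReal.ofReal
          ((D.filter fun S => e ∈ S).inf' h (objCost ObjType.sum c)
            - optVal ObjType.sum c D)
      else ⊤ := by
  intro e
  classical
  set m := optVal ObjType.sum c D with hm
  have hmD : m = D.inf' hD (objCost ObjType.sum c) := optVal_eq c D hD
  by_cases h : (D.filter fun S => e ∈ S).Nonempty
  · rw [dif_pos h]
    set F := D.filter fun S => e ∈ S with hF
    set mp := F.inf' h (objCost ObjType.sum c) with hmp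
    -- basic facts
    obtain ⟨Sp, hSpF, hSpv⟩ := Finset.exists_mem_eq_inf' h (objCost ObjType.sum c)
    have hSpD : Sp ∈ D := (Finset.mem_filter.mp hSpF).1
    have hSpe : e ∈ Sp := (Finset.mem_filter.mp hSpF).2
    have hmle : m ≤ mp := by
      rw [hmD, hmp, hSpv]; exact Finset.inf'_le _ hSpD
    have hM0 : 0 ≤ mp - m := sub_nonneg.mpr hmle
    apply le_antisymm
    · -- sup ≤ ofReal (mp - m)
      apply sSup_le
      rintro x ⟨a, ⟨⟨ha0, -⟩, hopt⟩, rfl⟩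
      apply ENNReal.ofReal_le_ofReal
      -- optVal perturbed ≤ mp - a, and = m
      have hle : optVal ObjType.sum (fun x => if x = e then c x - a else c x) D ≤ mp - a := by
        rw [optVal_eq _ _ hD]
        calc D.inf' hD (objCost ObjType.sum (fun x => if x = e then c x - a else c x))
            ≤ objCost ObjType.sum (fun x => if x = e then c x - a else c x) Sp :=
              Finset.inf'_le _ hSpD
          _ = mp - a := by rw [pert_cost, if_pos hSpe, hmp, hSpv]
      rw [hopt] at hle
      linarith
    · -- ofReal (mp - m) ≤ sup : show mp - m is in the set
      apply le_sSup
      refine ⟨mp - m, ⟨⟨hM0, fun hc => by cases hc⟩, ?_⟩, rfl⟩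
      -- optVal perturbed with a = mp - m equals m
      rw [optVal_eq _ _ hD]
      apply le_antisymm
      · -- ≤ m : find witness
        obtain ⟨S0, hS0D, hS0v⟩ := Finset.exists_mem_eq_inf' hD (objCost ObjType.sum c)
        have hS0m : objCost ObjType.sum c S0 = m := by rw [hmD, hS0v]
        by_cases he0 : e ∈ S0
        · have hS0F : S0 ∈ F := Finset.mem_filter.mpr ⟨hS0D, he0⟩
          have : mp ≤ m := hS0m ▸ Finset.inf'_le _ hS0F
          have hMeq : mp - m = 0 := le_antisymm (by linarith) hM0
          calc D.inf' hD (objCost ObjType.sum (fun x => if x = e then c x - (mp - m) else c x))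
              ≤ _ := Finset.inf'_le _ hS0D
            _ = m := by rw [pert_cost, hMeq, hS0m]; split <;> ring
        · calc D.inf' hD (objCost ObjType.sum (fun x => if x = e then c x - (mp - m) else c x))
              ≤ _ := Finset.inf'_le _ hS0D
            _ = m := by rw [pert_cost, if_neg he0, hS0m, sub_zero]
      · -- m ≤ inf'
        rw [Finset.le_inf'_iff]
        intro S hS
        rw [pert_cost]
        by_cases heS : e ∈ S
        · rw [if_pos heS]
          have : mp ≤ objCost ObjType.sum c S :=
            Finset.inf'_le _ (Finset.mem_filter.mpr ⟨hS, heS⟩)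
          linarith
        · rw [if_neg heS, sub_zero]
          exact le_trans (le_of_eq (optVal_eq c D hD)) (Finset.inf'_le _ hS)
  · rw [dif_neg h]
    unfold lTol
    rw [sSup_eq_top]
    intro b hb
    refine ⟨ENNReal.ofReal (b.toReal + 1), ⟨b.toReal + 1, ⟨⟨by positivity, fun hc => by cases hc⟩, ?_⟩, rfl⟩, ?_⟩
    · -- perturbed optVal unchanged since no feasible S contains e
      rw [optVal_eq _ _ hD, optVal_eq c D hD]
      apply Finset.inf'_congr _ rfl
      intro S hS
      have heS : e ∉ S := fun heS => h ⟨S, Finset.mem_filter.mpr ⟨hS, heS⟩⟩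
      rw [pert_cost, if_neg heS, sub_zero]
    · exact (ENNReal.lt_ofReal_iff_toReal_lt hb.ne).mpr (by linarith)
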